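/- Suppose ℓ(·; z) : ℝ^d → ℝ is G-Lipschitz for every z and α ∈ (0,1]. Define f(w,τ; z) = (1/α)·max(ℓ(w;z) − τ, 0) + τ on ℝ^d × ℝ. Then f(·,·; z) is G_α-Lipschitz (in the Euclidean norm on ℝ^{d+1}) where G_α = max{ √(G² + (1−α)²)/α, 1 }. -/

import Mathlib

private lemma cauchy2 (p q u v : ℝ) (hp : 0 ≤ p) (hq : 0 ≤ q) (hu : 0 ≤ u) (hv : 0 ≤ v) :
    p * u + q * v ≤ Real.sqrt (p ^ 2 + q ^ 2) * Real.sqrt (u ^ 2 + v ^ 2) := by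
  rw [← Real.sqrt_mul (by positivity)]
  rw [show p * u + q * v = Real.sqrt ((p * u + q * v) ^ 2) from
    (Real.sqrt_sq (by positivity)).symm]
  apply Real.sqrt_le_sqrt
  nlinarith [sq_nonneg (p * v - q * u)]

theorem stmt_2 {d : ℕ} {Z : Type*} (α G : ℝ) (hα : α ∈ Set.Ioc (0 : ℝ) 1) (hG : 0 ≤ G)
    (ℓ : EuclideanSpace ℝ (Fin d) → Z → ℝ)
    (hℓ : ∀ z : Z, LipschitzWith (Real.toNNReal G) (fun w => ℓ w z)) :
    ∀ z : Z,
      LipschitzWith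
        (Real.toNNReal (max (Real.sqrt (G ^ 2 + (1 - α) ^ 2) / α) 1))
        (fun x : WithLp 2 (EuclideanSpace ℝ (Fin d) × ℝ) =>
          (1 / α) * max (ℓ (WithLp.equiv 2 _ x).1 z - (WithLp.equiv 2 _ x).2) 0
            + (WithLp.equiv 2 _ x).2) := by
  intro z
  obtain ⟨hα0, hα1⟩ := hα
  set K1 : ℝ := Real.sqrt (G ^ 2 + (1 - α) ^ 2) / α with hK1def
  have hK1 : 0 ≤ K1 := div_nonneg (Real.sqrt_nonneg _) hα0.le
  set g₁ : WithLp 2 (EuclideanSpace ℝ (Fin d) × ℝ) → ℝ :=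
    fun x => (1 / α) * (ℓ (WithLp.equiv 2 _ x).1 z - (WithLp.equiv 2 _ x).2)
      + (WithLp.equiv 2 _ x).2 with hg₁def
  set g₂ : WithLp 2 (EuclideanSpace ℝ (Fin d) × ℝ) → ℝ :=
    fun x => (WithLp.equiv 2 _ x).2 with hg₂def
  -- g₂ is 1-Lipschitz
  have hg2 : LipschitzWith 1 g₂ := by
    apply LipschitzWith.of_dist_le_mul
    intro x y
    rw [NNReal.coe_one, one_mul, WithLp.prod_dist_eq_of_L2]
    calc dist (g₂ x) (g₂ y) = Real.sqrt (dist x.snd y.snd ^ 2) :=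
          (Real.sqrt_sq dist_nonneg).symm
      _ ≤ Real.sqrt (dist x.fst y.fst ^ 2 + dist x.snd y.snd ^ 2) :=
          Real.sqrt_le_sqrt (by nlinarith [sq_nonneg (dist x.fst y.fst)])
  -- g₁ is K1-Lipschitz
  have hg1 : LipschitzWith (Real.toNNReal K1) g₁ := by
    apply LipschitzWith.of_dist_le_mul
    intro x y
    rw [Real.coe_toNNReal _ hK1, WithLp.prod_dist_eq_of_L2]
    have hd1 : dist (ℓ ((WithLp.equiv 2 _ x).1) z) (ℓ ((WithLp.equiv 2 _ y).1) z)
        ≤ G * dist x.fst y.fst := by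
      have := (hℓ z).dist_le_mul ((WithLp.equiv 2 _ x).1) ((WithLp.equiv 2 _ y).1)
      rwa [Real.coe_toNNReal _ hG] at this
    have hdist : dist (g₁ x) (g₁ y)
        ≤ (G / α) * dist x.fst y.fst + ((1 - α) / α) * dist x.snd y.snd := by
      have hxy1 : dist (ℓ ((WithLp.equiv 2 _ x).1) z) (ℓ ((WithLp.equiv 2 _ y).1) z)
          = |ℓ ((WithLp.equiv 2 _ x).1) z - ℓ ((WithLp.equiv 2 _ y).1) z| := Real.dist_eq _ _
      have hxy2 : dist x.snd y.snd = |(WithLp.equiv 2 _ x).2 - (WithLp.equiv 2 _ y).2| :=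
        Real.dist_eq _ _
      rw [Real.dist_eq]
      have heq : g₁ x - g₁ y = (1 / α) * (ℓ ((WithLp.equiv 2 _ x).1) z
          - ℓ ((WithLp.equiv 2 _ y).1) z)
          + (1 - 1 / α) * ((WithLp.equiv 2 _ x).2 - (WithLp.equiv 2 _ y).2) := by
        simp only [hg₁def]; ring
      rw [heq]
      calc |(1 / α) * (ℓ ((WithLp.equiv 2 _ x).1) z - ℓ ((WithLp.equiv 2 _ y).1) z)
            + (1 - 1 / α) * ((WithLp.equiv 2 _ x).2 - (WithLp.equiv 2 _ y).2)|
          ≤ |(1 / α) * (ℓ ((WithLp.equiv 2 _ x).1) z - ℓ ((WithLp.equiv 2 _ y).1) z)|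
            + |(1 - 1 / α) * ((WithLp.equiv 2 _ x).2 - (WithLp.equiv 2 _ y).2)| :=
            abs_add_le _ _
        _ = (1 / α) * |ℓ ((WithLp.equiv 2 _ x).1) z - ℓ ((WithLp.equiv 2 _ y).1) z|
            + ((1 - α) / α) * |(WithLp.equiv 2 _ x).2 - (WithLp.equiv 2 _ y).2| := by
            have hle : (1:ℝ) ≤ 1 / α := (le_div_iff₀ hα0).mpr (by linarith)
            have habs : |1 - 1 / α| = (1 - α) / α := by
              rw [abs_of_nonpos (by linarith)]
              field_simp
              ring
            rw [abs_mul, abs_mul, abs_of_nonneg (by positivity : (0:ℝ) ≤ 1 / α), habs]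
        _ ≤ (G / α) * dist x.fst y.fst + ((1 - α) / α) * dist x.snd y.snd := by
            rw [← hxy1] at *
            rw [← hxy2]
            have h1 : (1 / α) * dist (ℓ ((WithLp.equiv 2 _ x).1) z)
                (ℓ ((WithLp.equiv 2 _ y).1) z) ≤ (1 / α) * (G * dist x.fst y.fst) := by
              apply mul_le_mul_of_nonneg_left hd1 (by positivity)
            have h2 : (G / α) * dist x.fst y.fst = (1 / α) * (G * dist x.fst y.fst) := by ring
            rw [h2]; linarith
    calc dist (g₁ x) (g₁ y)
        ≤ (G / α) * dist x.fst y.fst + ((1 - α) / α) * dist x.snd y.snd := hdist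
      _ ≤ Real.sqrt ((G / α) ^ 2 + ((1 - α) / α) ^ 2)
          * Real.sqrt (dist x.fst y.fst ^ 2 + dist x.snd y.snd ^ 2) :=
          cauchy2 _ _ _ _ (by positivity)
            (div_nonneg (by linarith) hα0.le) dist_nonneg dist_nonneg
      _ = K1 * Real.sqrt (dist x.fst y.fst ^ 2 + dist x.snd y.snd ^ 2) := by
          congr 1
          rw [show (G / α) ^ 2 + ((1 - α) / α) ^ 2 = (G ^ 2 + (1 - α) ^ 2) / α ^ 2 by ring,
            Real.sqrt_div (by positivity), Real.sqrt_sq hα0.le]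
  -- combine
  have hmax := hg1.max hg2
  have hconst : Real.toNNReal (max K1 1) = max (Real.toNNReal K1) 1 := by
    rcases le_total K1 1 with h | h
    · rw [max_eq_right h, max_eq_right (by simpa using Real.toNNReal_mono h), Real.toNNReal_one]
    · rw [max_eq_left h, max_eq_left (by simpa using Real.toNNReal_mono h)]
  rw [show Real.toNNReal (max (Real.sqrt (G ^ 2 + (1 - α) ^ 2) / α) 1)
      = max (Real.toNNReal K1) 1 from hconst]
  have hfun : (fun x : WithLp 2 (EuclideanSpace ℝ (Fin d) × ℝ) =>
      (1 / α) * max (ℓ (WithLp.equiv 2 _ x).1 z - (WithLp.equiv 2 _ x).2) 0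
        + (WithLp.equiv 2 _ x).2) = fun x => max (g₁ x) (g₂ x) := by
    funext x
    simp only [hg₁def, hg₂def]
    rw [mul_max_of_nonneg _ _ (by positivity : (0:ℝ) ≤ 1 / α), mul_zero,
      ← max_add_add_right, zero_add]
  rw [hfun]
  exact hmax
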